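/- Fix T > 0, σ ∈ ℝ, R ∈ (0,1], t₀ ∈ [0,T), and let α(t) = λ e^{-ρ t} + (1-λ) e^{-γ t} with γ > ρ > 0 and λ ∈ (0,1). Define Q(s) = e^{-σ²(T-s)}/α(T-t₀) + ∫_s^T e^{-σ²(r-s)}/(α(r-t₀) R) dr for s ∈ [t₀,T]. Then Q(s) > 0 for all s ∈ [t₀,T], and the function P(s) = 1/Q(s) is differentiable, strictly positive on [t₀,T], and satisfies the time-dependent Riccati equation P'(s) + σ² P(s) - P(s)²/(α(s-t₀) R) = 0 for s ∈ [t₀,T] with terminal condition P(T) = α(T-t₀). -/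

import Mathlib

open Real Set

/-- With `T > 0`, `σ ∈ ℝ`, `R ∈ (0,1]`, `t₀ ∈ [0,T)`, and the
quasi-hyperbolic discount `α(t) = λ e^{-ρt} + (1-λ) e^{-γt}`, the function
`Q(s) = e^{-σ²(T-s)}/α(T-t₀) + ∫_s^T e^{-σ²(r-s)}/(α(r-t₀) R) dr` is positive on
`[t₀,T]`, and `P = 1/Q` is differentiable, strictly positive on `[t₀,T]`, and
solves `P'(s) + σ² P(s) - P(s)²/(α(s-t₀) R) = 0` with `P(T) = α(T-t₀)`. -/
theorem single_player_precommitment_riccati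
    (T σ R t₀ ρ γ l : ℝ) (hT : 0 < T) (hR0 : 0 < R) (hR1 : R ≤ 1)
    (ht₀ : t₀ ∈ Set.Ico (0 : ℝ) T)
    (hρ : 0 < ρ) (hργ : ρ < γ) (hl0 : 0 < l) (hl1 : l < 1)
    (α : ℝ → ℝ)
    (hα : α = fun t : ℝ => l * Real.exp (-ρ * t) + (1 - l) * Real.exp (-γ * t))
    (Q : ℝ → ℝ)
    (hQ : Q = fun s : ℝ =>
      Real.exp (-σ ^ 2 * (T - s)) / α (T - t₀)
        + ∫ r in s..T, Real.exp (-σ ^ 2 * (r - s)) / (α (r - t₀) * R)) :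
    (∀ s ∈ Set.Icc t₀ T, 0 < Q s) ∧
    (∃ P' : ℝ → ℝ, ∀ s ∈ Set.Icc t₀ T,
      HasDerivAt (fun s' : ℝ => 1 / Q s') (P' s) s ∧
      0 < 1 / Q s ∧
      P' s + σ ^ 2 * (1 / Q s) - (1 / Q s) ^ 2 / (α (s - t₀) * R) = 0) ∧
    1 / Q T = α (T - t₀) := by
  have h1l : 0 < 1 - l := by linarith
  have hαpos : ∀ t, 0 < α t := by
    intro t; rw [hα]; positivity
  have hαcont : Continuous α := by
    rw [hα]; continuity
  set g : ℝ → ℝ := fun r => Real.exp (-σ ^ 2 * r) / (α (r - t₀) * R) with hg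
  have hgcont : Continuous g := by
    apply Continuous.div (by continuity) (by continuity)
    intro r; exact ne_of_gt (mul_pos (hαpos _) hR0)
  have hgpos : ∀ r, 0 < g r := fun r =>
    div_pos (Real.exp_pos _) (mul_pos (hαpos _) hR0)
  set C : ℝ := Real.exp (-σ ^ 2 * T) / α (T - t₀) with hC
  have hCpos : 0 < C := div_pos (Real.exp_pos _) (hαpos _)
  have hQeq : ∀ s, Q s = Real.exp (σ ^ 2 * s) * (C + ∫ r in s..T, g r) := by
    intro s
    rw [hQ]
    simp only
    have h1 : Real.exp (-σ ^ 2 * (T - s)) / α (T - t₀)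
        = Real.exp (σ ^ 2 * s) * C := by
      rw [hC, show -σ ^ 2 * (T - s) = σ ^ 2 * s + -σ ^ 2 * T by ring,
        Real.exp_add, mul_div_assoc]
    have h2 : (∫ r in s..T, Real.exp (-σ ^ 2 * (r - s)) / (α (r - t₀) * R))
        = Real.exp (σ ^ 2 * s) * ∫ r in s..T, g r := by
      rw [← intervalIntegral.integral_const_mul]
      apply intervalIntegral.integral_congr
      intro r _
      rw [hg]
      simp only
      rw [show -σ ^ 2 * (r - s) = σ ^ 2 * s + -σ ^ 2 * r by ring,
        Real.exp_add, mul_div_assoc]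
    rw [h1, h2, mul_add]
  -- positivity
  have hQpos : ∀ s ∈ Set.Icc t₀ T, 0 < Q s := by
    intro s hs
    rw [hQeq s]
    have hint : 0 ≤ ∫ r in s..T, g r :=
      intervalIntegral.integral_nonneg hs.2 (fun r _ => (hgpos r).le)
    positivity
  -- derivative
  set I : ℝ → ℝ := fun s => ∫ r in t₀..s, g r with hI
  have hIF : ∀ s, (∫ r in s..T, g r) = I T - I s := by
    intro s
    rw [hI]
    exact (intervalIntegral.integral_interval_sub_left
      (hgcont.intervalIntegrable _ _) (hgcont.intervalIntegrable _ _)).symm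
  have hIderiv : ∀ s, HasDerivAt I (g s) s := by
    intro s
    exact intervalIntegral.integral_hasDerivAt_right
      (hgcont.intervalIntegrable _ _)
      (hgcont.stronglyMeasurableAtFilter _ _)
      hgcont.continuousAt
  have hQderiv : ∀ s, HasDerivAt Q (σ ^ 2 * Q s - 1 / (α (s - t₀) * R)) s := by
    intro s
    have hfun : Q = fun s' => Real.exp (σ ^ 2 * s') * (C + (I T - I s')) := by
      funext s'; rw [hQeq s', hIF s']
    rw [hfun]
    have h1 : HasDerivAt (fun s' : ℝ => Real.exp (σ ^ 2 * s'))
        (Real.exp (σ ^ 2 * s) * σ ^ 2) s := by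
      simpa using ((hasDerivAt_id s).const_mul (σ ^ 2)).exp
    have h2 : HasDerivAt (fun s' : ℝ => C + (I T - I s')) (-(g s)) s :=
      (((hIderiv s).const_sub (I T)).const_add C)
    have h3 := h1.mul h2
    convert h3 using 1
    iterate 3 rfl
    have hexp : Real.exp (σ ^ 2 * s) * g s = 1 / (α (s - t₀) * R) := by
      rw [hg]
      simp only
      rw [eq_div_iff (ne_of_gt (mul_pos (hαpos _) hR0)), mul_assoc,
        div_mul_cancel₀ _ (ne_of_gt (mul_pos (hαpos _) hR0)), ← Real.exp_add,
        show σ ^ 2 * s + -σ ^ 2 * s = 0 by ring, Real.exp_zero]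
    have hQs : Q s = Real.exp (σ ^ 2 * s) * (C + (I T - I s)) := by
      rw [hQeq s, hIF s]
    beta_reduce
    rw [← hexp]; ring
  refine ⟨hQpos, ⟨fun s => -(σ ^ 2 * Q s - 1 / (α (s - t₀) * R)) / (Q s) ^ 2,
    fun s hs => ?_⟩, ?_⟩
  · have hQne : Q s ≠ 0 := ne_of_gt (hQpos s hs)
    have hαRne : α (s - t₀) * R ≠ 0 := ne_of_gt (mul_pos (hαpos _) hR0)
    constructor
    · have := (hQderiv s).inv hQne
      simp only [one_div]
      convert this using 1
      iterate 3 rfl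
      rw [one_div]
    refine ⟨one_div_pos.mpr (hQpos s hs), ?_⟩
    field_simp
    ring
  · rw [hQ]
    simp only [sub_self, mul_zero, neg_zero, intervalIntegral.integral_same,
      add_zero, Real.exp_zero]
    rw [one_div_one_div]
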